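/- The multiplication obtained from a MHSS makes the algebra map a monoid-compatible algebra: with (t, η, τ) a MHSS and μ := {(t,η)}⟦1_t⟧, the diagram θ_{(t,η),t} · H μ · τ = (1_t ⊗ τ) · μ commutes, i.e., (t, η, μ, τ) is an (H, θ)-monoid. -/

import Mathlib

open CategoryTheory Category MonoidalCategory

section

variable {V : Type*} [Category V] [MonoidalCategory V]

/-- A pointed tensorial strength for an endofunctor `H` on a monoidal category `V`:
for each monoidal-pointed object `(z, e : I ⟶ z)` and each `x`, a morphism
`θ_{(z,e),x} : z ⊗ H x ⟶ H (z ⊗ x)`, natural in both arguments, satisfying the unitor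
law and the associator-compatibility (tensor) law. -/
structure PointedStrength (H : V ⥤ V) where
  θ : ∀ (z : V), (𝟙_ V ⟶ z) → ∀ x : V, z ⊗ H.obj x ⟶ H.obj (z ⊗ x)
  /-- naturality in the pointed-object argument -/
  nat_pt : ∀ {z z' : V} (e : 𝟙_ V ⟶ z) (e' : 𝟙_ V ⟶ z') (g : z ⟶ z'), e ≫ g = e' →
    ∀ x : V, g ▷ H.obj x ≫ θ z' e' x = θ z e x ≫ H.map (g ▷ x)
  /-- naturality in the second argument -/
  nat_arg : ∀ (z : V) (e : 𝟙_ V ⟶ z) {x x' : V} (f : x ⟶ x'),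
    z ◁ H.map f ≫ θ z e x' = θ z e x ≫ H.map (z ◁ f)
  /-- preservation of the unitor -/
  unit_law : ∀ x : V, θ (𝟙_ V) (𝟙 (𝟙_ V)) x ≫ H.map (λ_ x).hom = (λ_ (H.obj x)).hom
  /-- preservation of the actor (compatibility with the associator and the tensor of
  pointed objects) -/
  tensor_law : ∀ (z : V) (e : 𝟙_ V ⟶ z) (w : V) (e' : 𝟙_ V ⟶ w) (x : V),
    θ (z ⊗ w) ((λ_ (𝟙_ V)).inv ≫ (e ⊗ₘ e')) x ≫ H.map (α_ z w x).hom =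
      (α_ z w (H.obj x)).hom ≫ z ◁ θ w e' x ≫ θ z e (w ⊗ x)

/-- `(t, η, τ)` is a monoidal heterogeneous substitution system (MHSS) for `(V, H, θ)`:
for every `(z, e : I ⟶ z, f : z ⟶ t)` there is a unique `h : z ⊗ t ⟶ t` with
`(1_z ⊗ η) · h = ρ_z · f` and `(1_z ⊗ τ) · h = θ_{(z,e),t} · H h · τ`. -/
def IsMHSS {H : V ⥤ V} (S : PointedStrength H)
    (t : V) (η : 𝟙_ V ⟶ t) (τ : H.obj t ⟶ t) : Prop :=
  ∀ (z : V) (e : 𝟙_ V ⟶ z) (f : z ⟶ t),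
    ∃! h : z ⊗ t ⟶ t,
      z ◁ η ≫ h = (ρ_ z).hom ≫ f ∧
      z ◁ τ ≫ h = S.θ z e t ≫ H.map h ≫ τ

end

section

variable {V : Type*} [Category V] [MonoidalCategory V]


theorem assoc_nat_right_aux {V : Type*} [Category V] [MonoidalCategory V]
    {X Y Z Z' : V} (f : Z ⟶ Z') :
    (X ⊗ Y) ◁ f ≫ (α_ X Y Z').hom = (α_ X Y Z).hom ≫ X ◁ (Y ◁ f) := by
  exact associator_naturality_right X Y f

/-- The multiplication obtained from a MHSS makes the algebra map monoid-compatible: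
with `(t, η, τ)` a MHSS and `μ := {(t,η)}⟦1_t⟧`, the diagram
`θ_{(t,η),t} · H μ · τ = (1_t ⊗ τ) · μ` commutes; i.e., `(t, η, μ, τ)` is an
`(H, θ)`-monoid. -/
theorem mhss_gives_H_monoid {H : V ⥤ V} (S : PointedStrength H)
    (t : V) (η : 𝟙_ V ⟶ t) (τ : H.obj t ⟶ t)
    (hmhss : IsMHSS S t η τ)
    (μ : t ⊗ t ⟶ t)
    -- `μ` is the unique morphism `{(t,η)}⟦1_t⟧` determined by the MHSS property:
    (hμ₁ : t ◁ η ≫ μ = (ρ_ t).hom ≫ 𝟙 t)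
    (hμ₂ : t ◁ τ ≫ μ = S.θ t η t ≫ H.map μ ≫ τ) :
    -- `(t, η, μ)` is a monoid ...
    (η ▷ t ≫ μ = (λ_ t).hom ∧
     t ◁ η ≫ μ = (ρ_ t).hom ∧
     (α_ t t t).hom ≫ t ◁ μ ≫ μ = μ ▷ t ≫ μ) ∧
    -- ... and the substitution compatibility square commutes:
    S.θ t η t ≫ H.map μ ≫ τ = t ◁ τ ≫ μ := by

  -- left unit law via uniqueness at (𝟙, id, η)
  obtain ⟨h, -, huniq⟩ := hmhss (𝟙_ V) (𝟙 _) η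
  have hlam : (λ_ t).hom = h := by
    refine huniq _ ⟨?_, ?_⟩
    · rw [leftUnitor_naturality, unitors_equal]
    · rw [leftUnitor_naturality, ← S.unit_law t, assoc]
  have hcand : η ▷ t ≫ μ = h := by
    refine huniq _ ⟨?_, ?_⟩
    · rw [whisker_exchange_assoc, hμ₁, comp_id, rightUnitor_naturality]
    · rw [whisker_exchange_assoc, hμ₂,
        reassoc_of% (S.nat_pt (𝟙 (𝟙_ V)) η η (by simp) t)]
      simp [H.map_comp]
  have hleft : η ▷ t ≫ μ = (λ_ t).hom := hcand.trans hlam.symm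
  -- associativity via uniqueness at (t ⊗ t, (λ).inv ≫ (η ⊗ₘ η), μ)
  have heμ : ((λ_ (𝟙_ V)).inv ≫ (η ⊗ₘ η)) ≫ μ = η := by
    rw [assoc, tensorHom_def', assoc, hleft]
    rw [leftUnitor_naturality, Iso.inv_hom_id_assoc]
  obtain ⟨k, -, kuniq⟩ := hmhss (t ⊗ t) ((λ_ (𝟙_ V)).inv ≫ (η ⊗ₘ η)) μ
  have hk1 : μ ▷ t ≫ μ = k := by
    refine kuniq _ ⟨?_, ?_⟩
    · rw [whisker_exchange_assoc, hμ₁, comp_id, rightUnitor_naturality]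
    · rw [whisker_exchange_assoc, hμ₂,
        reassoc_of% (S.nat_pt ((λ_ (𝟙_ V)).inv ≫ (η ⊗ₘ η)) η μ heμ t)]
      simp [H.map_comp]
  have hk2 : (α_ t t t).hom ≫ t ◁ μ ≫ μ = k := by
    refine kuniq _ ⟨?_, ?_⟩
    · rw [reassoc_of% (assoc_nat_right_aux (X := t) (Y := t) η),
        ← MonoidalCategory.whiskerLeft_comp_assoc, hμ₁]
      simp only [Category.comp_id]
      rw [rightUnitor_tensor_hom_assoc]
    · calc (t ⊗ t) ◁ τ ≫ (α_ t t t).hom ≫ t ◁ μ ≫ μ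
          = (α_ t t (H.obj t)).hom ≫ t ◁ (t ◁ τ ≫ μ) ≫ μ := by
            rw [reassoc_of% (assoc_nat_right_aux (X := t) (Y := t) τ)]
            simp
        _ = (α_ t t (H.obj t)).hom ≫ t ◁ S.θ t η t ≫ t ◁ H.map μ ≫
              (t ◁ τ ≫ μ) := by
            rw [hμ₂]; simp only [MonoidalCategory.whiskerLeft_comp, Category.assoc]
            rw [hμ₂]
        _ = (α_ t t (H.obj t)).hom ≫ t ◁ S.θ t η t ≫
              (t ◁ H.map μ ≫ S.θ t η t) ≫ H.map μ ≫ τ := by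
            rw [hμ₂]; simp only [Category.assoc]
        _ = ((α_ t t (H.obj t)).hom ≫ t ◁ S.θ t η t ≫ S.θ t η (t ⊗ t)) ≫
              H.map (t ◁ μ) ≫ H.map μ ≫ τ := by rw [S.nat_arg t η μ]; simp
        _ = S.θ (t ⊗ t) ((λ_ (𝟙_ V)).inv ≫ (η ⊗ₘ η)) t ≫
              H.map ((α_ t t t).hom ≫ t ◁ μ ≫ μ) ≫ τ := by
            rw [← S.tensor_law t η t η t]
            simp [H.map_comp]
  exact ⟨⟨hleft, hμ₁.trans (comp_id _), hk2.trans hk1.symm⟩, hμ₂.symm⟩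

end
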